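/- Let k be a field and n ≥ 1 an integer. There exists a normal subgroup N of SAut_k(A^n) that contains all translations but does not contain SL_n(k) (embedded as linear automorphisms) if and only if |k| = 2 and n = 2. -/

import Mathlib

open MvPolynomial

/-- Endomorphisms of affine `n`-space over `R`: `n`-tuples of polynomials in
`R[x_1,…,x_n]`, with composition given by substitution. -/
def PolyEnd (R : Type*) [CommRing R] (n : ℕ) : Type _ := Fin n → MvPolynomial (Fin n) R

namespace PolyEnd

variable {R S : Type*} [CommRing R] [CommRing S] {n : ℕ}

noncomputable instance : Monoid (PolyEnd R n) where
  one := fun i => X i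
  mul f g := fun i => bind₁ g (f i)
  mul_assoc f g h := funext fun i => by
    show bind₁ h (bind₁ g (f i)) = bind₁ (fun j => bind₁ h (g j)) (f i)
    exact bind₁_bind₁ g h (f i)
  one_mul f := funext fun i => by
    show bind₁ f (X i) = f i
    exact bind₁_X_right f i
  mul_one f := funext fun i => by
    show bind₁ X (f i) = f i
    rw [bind₁_X_left, AlgHom.id_apply]

@[simp] lemma mul_apply (f g : PolyEnd R n) (i : Fin n) :
    (f * g) i = bind₁ g (f i) := rfl

@[simp] lemma one_apply (i : Fin n) : (1 : PolyEnd R n) i = X i := rfl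

/-- The Jacobian determinant of an endomorphism. -/
noncomputable def jac (f : PolyEnd R n) : MvPolynomial (Fin n) R :=
  (Matrix.of fun i j => pderiv j (f i)).det

/-- The chain rule for partial derivatives of a substitution. -/
lemma pderiv_bind₁ (g : Fin n → MvPolynomial (Fin n) R)
    (p : MvPolynomial (Fin n) R) (j : Fin n) :
    pderiv j (bind₁ g p) = ∑ i, bind₁ g (pderiv i p) * pderiv j (g i) := by
  induction p using MvPolynomial.induction_on with
  | C a => simp
  | add p q hp hq => simp [hp, hq, Finset.sum_add_distrib, add_mul]
  | mul_X p i hp =>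
      rw [map_mul, bind₁_X_right, pderiv_mul, hp]
      have key : ∀ l : Fin n, bind₁ g (pderiv l (p * X i)) * pderiv j (g l)
          = bind₁ g (pderiv l p) * pderiv j (g l) * g i
            + (if l = i then bind₁ g p * pderiv j (g i) else 0) := by
        intro l
        rw [pderiv_mul, pderiv_X]
        by_cases h : l = i
        · subst h
          simp only [Pi.single_apply, if_pos rfl, map_add, map_mul, bind₁_X_right,
            bind₁_C_right, if_pos rfl]
          ring_nf
          simp [mul_comm, mul_left_comm, mul_assoc]
        · simp only [Pi.single_apply, if_neg (Ne.symm h), if_neg h, mul_zero, map_mul,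
            map_add, map_zero, add_zero, bind₁_X_right]
          ring
      rw [Finset.sum_congr rfl fun l _ => key l, Finset.sum_add_distrib]
      simp [Finset.sum_mul]

lemma jac_one : jac (1 : PolyEnd R n) = 1 := by
  unfold jac
  have : (Matrix.of fun i j => pderiv j ((1 : PolyEnd R n) i))
      = (1 : Matrix (Fin n) (Fin n) (MvPolynomial (Fin n) R)) := by
    ext i j
    simp [Matrix.one_apply, pderiv_X, Pi.single_apply, eq_comm]
  rw [this, Matrix.det_one]

/-- The chain rule for Jacobians. -/
lemma jac_mul (f g : PolyEnd R n) : jac (f * g) = bind₁ g (jac f) * jac g := by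
  unfold jac
  have : (Matrix.of fun i j => pderiv j ((f * g) i))
      = (Matrix.of fun i l => pderiv l (f i)).map (bind₁ g)
        * (Matrix.of fun l j => pderiv j (g l)) := by
    refine Matrix.ext fun i j => ?_
    exact pderiv_bind₁ g (f i) j
  rw [this, Matrix.det_mul]
  congr 1
  exact ((bind₁ g).map_det (Matrix.of fun i l => pderiv l (f i))).symm

end PolyEnd

/-- Automorphisms of affine `n`-space over `R` : endomorphisms admitting a two-sided
compositional inverse. -/
abbrev PolyAut (R : Type*) [CommRing R] (n : ℕ) := (PolyEnd R n)ˣ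

namespace PolyAut

variable {R S : Type*} [CommRing R] [CommRing S] {n : ℕ}

lemma bind₁_val_injective (f : PolyAut R n) :
    Function.Injective (bind₁ (σ := Fin n) (f.val : Fin n → MvPolynomial (Fin n) R)) := by
  intro p q h
  have hinv : ∀ r : MvPolynomial (Fin n) R, bind₁ (f.inv : Fin n → _) (bind₁ (f.val : Fin n → _) r) = r := by
    intro r
    refine (bind₁_bind₁ _ _ r).trans ?_
    have : (fun i => bind₁ (f.inv : Fin n → _) ((f.val : Fin n → _) i)) = (f.val * f.inv : PolyEnd R n) := rfl
    rw [this, f.val_inv]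
    show bind₁ (fun i => X i) r = r
    rw [show (fun i : Fin n => (X i : MvPolynomial (Fin n) R)) = X from rfl,
      bind₁_X_left, AlgHom.id_apply]
  calc p = bind₁ (f.inv : Fin n → _) (bind₁ (f.val : Fin n → _) p) := (hinv p).symm
    _ = bind₁ (f.inv : Fin n → _) (bind₁ (f.val : Fin n → _) q) := by rw [h]
    _ = q := hinv q

end PolyAut

/-- The subgroup of automorphisms of Jacobian `1`. -/
noncomputable def SAutGrp (R : Type*) [CommRing R] (n : ℕ) : Subgroup (PolyAut R n) where
  carrier := {f | PolyEnd.jac f.val = 1}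
  one_mem' := PolyEnd.jac_one
  mul_mem' := by
    intro f g hf hg
    show PolyEnd.jac (f.val * g.val) = 1
    rw [PolyEnd.jac_mul, hf, hg, map_one, one_mul]
  inv_mem' := by
    intro f hf
    show PolyEnd.jac f.inv = 1
    apply PolyAut.bind₁_val_injective f
    have h1 : PolyEnd.jac (f.inv * f.val) = 1 := by
      rw [f.inv_val]; exact PolyEnd.jac_one
    rw [PolyEnd.jac_mul, hf, mul_one] at h1
    rw [map_one]
    exact h1

lemma mem_SAutGrp_iff {R : Type*} [CommRing R] {n : ℕ} (f : PolyAut R n) :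
    f ∈ SAutGrp R n ↔ PolyEnd.jac f.val = 1 := Iff.rfl

section Translations

variable {R : Type*} [CommRing R] {n : ℕ}

/-- The translation endomorphism `(x_1 + c_1, …, x_n + c_n)`. -/
noncomputable def translEnd (c : Fin n → R) : PolyEnd R n := fun i => X i + C (c i)

lemma translEnd_mul (c d : Fin n → R) :
    translEnd c * translEnd d = translEnd (c + d) := by
  funext i
  show bind₁ (translEnd d) (translEnd c i) = translEnd (c + d) i
  simp only [translEnd, map_add, bind₁_C_right]
  rw [show bind₁ (translEnd d) (X i) = translEnd d i from bind₁_X_right _ i]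
  rw [show bind₁ (translEnd d) (C (c i)) = C (c i) from bind₁_C_right _ _]
  show X i + C (d i) + C (c i) = X i + C (c i + d i)
  rw [map_add]; ring

lemma translEnd_zero : translEnd (0 : Fin n → R) = 1 := by
  funext i
  show X i + C 0 = X i
  simp

/-- The translation automorphism `(x_1 + c_1, …, x_n + c_n)`. -/
noncomputable def transl (c : Fin n → R) : PolyAut R n where
  val := translEnd c
  inv := translEnd (-c)
  val_inv := by rw [translEnd_mul, add_neg_cancel, translEnd_zero]
  inv_val := by rw [translEnd_mul, neg_add_cancel, translEnd_zero]

@[simp] lemma transl_val (c : Fin n → R) : (transl c).val = translEnd c := rfl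

lemma jac_translEnd (c : Fin n → R) : PolyEnd.jac (translEnd c) = 1 := by
  unfold PolyEnd.jac
  have : (Matrix.of fun i j => pderiv j (translEnd c i))
      = (1 : Matrix (Fin n) (Fin n) (MvPolynomial (Fin n) R)) := by
    ext i j
    simp [translEnd, Matrix.one_apply, pderiv_X, Pi.single_apply, eq_comm]
  rw [this, Matrix.det_one]

lemma transl_mem_SAutGrp (c : Fin n → R) : transl c ∈ SAutGrp R n := jac_translEnd c

/-- The translation as element of `SAut`. -/
noncomputable def translS (c : Fin n → R) : ↥(SAutGrp R n) := ⟨transl c, transl_mem_SAutGrp c⟩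

/-- `f` is a translation. -/
def IsTranslation (f : PolyAut R n) : Prop := ∃ c : Fin n → R, f = transl c

end Translations

section Linear

variable {R : Type*} [CommRing R] {n : ℕ}

/-- The linear endomorphism associated with a matrix. -/
noncomputable def linEnd (M : Matrix (Fin n) (Fin n) R) : PolyEnd R n :=
  fun i => ∑ j, C (M i j) * X j

/-- `f` is a linear automorphism (i.e. in the image of `GL_n`). -/
def IsLinear (f : PolyAut R n) : Prop := ∃ M : Matrix (Fin n) (Fin n) R, f.val = linEnd M

/-- `f` is a linear automorphism given by a matrix of determinant 1
(i.e. in the image of `SL_n`). -/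
def MemSL (f : PolyAut R n) : Prop :=
  ∃ M : Matrix (Fin n) (Fin n) R, M.det = 1 ∧ f.val = linEnd M

/-- `f` is a triangular automorphism. -/
def IsTriangular (f : PolyAut R n) : Prop :=
  ∃ (a : Fin n → Rˣ) (b : Fin n → MvPolynomial (Fin n) R),
    (∀ i : Fin n, b i ∈ MvPolynomial.supported R {j : Fin n | (j : ℕ) < (i : ℕ)}) ∧
    ∀ i : Fin n, f.val i = C ((a i : R)) * X i + b i

/-- The tame subgroup, generated by linear and triangular automorphisms. -/
noncomputable def TameGrp (R : Type*) [CommRing R] (n : ℕ) : Subgroup (PolyAut R n) :=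
  Subgroup.closure {f | IsLinear f ∨ IsTriangular f}

end Linear

section Map

variable {R S : Type*} [CommRing R] [CommRing S] {n : ℕ}

/-- Applying a ring homomorphism to all coefficients, as a monoid homomorphism of
endomorphisms of affine `n`-space. -/
noncomputable def endMapHom (φ : R →+* S) : PolyEnd R n →* PolyEnd S n where
  toFun f := fun i => MvPolynomial.map φ (f i)
  map_one' := funext fun i => by
    show MvPolynomial.map φ (X i) = X i
    simp
  map_mul' f g := funext fun i => by
    show MvPolynomial.map φ (bind₁ g (f i)) = bind₁ (fun j => MvPolynomial.map φ (g j)) (MvPolynomial.map φ (f i))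
    exact map_bind₁ _ _ _

/-- Applying a ring homomorphism to all coefficients, on automorphisms. -/
noncomputable def autMap (φ : R →+* S) : PolyAut R n →* PolyAut S n :=
  Units.map (endMapHom φ)

lemma jac_endMapHom (φ : R →+* S) (f : PolyEnd R n) :
    PolyEnd.jac (endMapHom φ f) = MvPolynomial.map φ (PolyEnd.jac f) := by
  unfold PolyEnd.jac
  have : (Matrix.of fun i j => pderiv j ((endMapHom φ f) i))
      = (Matrix.of fun i j => pderiv j (f i)).map (MvPolynomial.map φ) :=
    Matrix.ext fun i j => by
      exact pderiv_map (φ := φ) (f := f i) (i := j)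
  rw [this, RingHom.map_det]
  rfl

/-- Specialisation of an automorphism over `R[t]` at a value `t₀ ∈ R`. -/
noncomputable def specAut (t0 : R) : PolyAut (Polynomial R) n →* PolyAut R n :=
  autMap (Polynomial.evalRingHom t0)

lemma specAut_mem_SAutGrp (h : PolyAut (Polynomial R) n)
    (hh : h ∈ SAutGrp (Polynomial R) n) (t0 : R) :
    specAut t0 h ∈ SAutGrp R n := by
  show PolyEnd.jac ((specAut t0 h).val) = 1
  have : (specAut t0 h).val = endMapHom (Polynomial.evalRingHom t0) h.val := rfl
  rw [this, jac_endMapHom, hh, map_one]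

/-- Specialisation, from `SAut` over `R[t]` to `SAut` over `R`. -/
noncomputable def specSAut (t0 : R) (h : PolyAut (Polynomial R) n)
    (hh : h ∈ SAutGrp (Polynomial R) n) : ↥(SAutGrp R n) :=
  ⟨specAut t0 h, specAut_mem_SAutGrp h hh t0⟩

/-- A subgroup `N` of `SAut_k(𝔸ⁿ)` is closed under specialisation if for every
automorphism `h` over `k[t]` of Jacobian `1` all of whose specialisations at
`t₀ ≠ 0` lie in `N`, the specialisation at `0` also lies in `N`. Every subgroup
that is closed in the ind-topology has this property. -/
def ClosedUnderSpec {R : Type*} [CommRing R] {n : ℕ} (N : Subgroup ↥(SAutGrp R n)) : Prop :=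
  ∀ (h : PolyAut (Polynomial R) n) (hh : h ∈ SAutGrp (Polynomial R) n),
    (∀ t0 : R, t0 ≠ 0 → specSAut t0 h hh ∈ N) → specSAut 0 h hh ∈ N

/-- A subgroup `N` of `Aut_k(𝔸ⁿ)` is closed under specialisation if for every
automorphism `h` over `k[t]` all of whose specialisations at `t₀ ≠ 0` lie in `N`,
the specialisation at `0` also lies in `N`. -/
def ClosedUnderSpecAut {R : Type*} [CommRing R] {n : ℕ} (N : Subgroup (PolyAut R n)) : Prop :=
  ∀ h : PolyAut (Polynomial R) n,
    (∀ t0 : R, t0 ≠ 0 → specAut t0 h ∈ N) → specAut 0 h ∈ N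

end Map



lemma bind₁_X_right_pe {R : Type*} [CommRing R] {n : ℕ} (f : PolyEnd R n) (i : Fin n) :
    bind₁ f (X i) = f i := bind₁_X_right f i

lemma bind₁_C_right_pe {R : Type*} [CommRing R] {n : ℕ} (f : PolyEnd R n) (r : R) :
    bind₁ f (C r) = C r := bind₁_C_right f r

lemma bind₁_bind₁_pe {R : Type*} [CommRing R] {n : ℕ} (f g : PolyEnd R n)
    (p : MvPolynomial (Fin n) R) :
    bind₁ g (bind₁ f p) = bind₁ (fun i => bind₁ g (f i)) p := bind₁_bind₁ f g p

section Aux1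

variable {k : Type*} [Field k] {n : ℕ}

lemma SAut_ext {f g : ↥(SAutGrp k n)}
    (h : ((f : PolyAut k n) : PolyEnd k n) = ((g : PolyAut k n) : PolyEnd k n)) : f = g :=
  Subtype.ext (Units.ext h)

lemma bind₁_eq_self_of_supported {s : Set (Fin n)} (g : Fin n → MvPolynomial (Fin n) k)
    (hg : ∀ j ∈ s, g j = X j) {p : MvPolynomial (Fin n) k} (hp : p ∈ supported k s) :
    bind₁ g p = p := by
  rw [supported_eq_adjoin_X] at hp
  induction hp using Algebra.adjoin_induction with
  | mem x hx =>
      obtain ⟨j, hj, rfl⟩ := hx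
      rw [bind₁_X_right]; exact hg j hj
  | algebraMap r => simp [algebraMap_eq]
  | add x y _ _ hx hy => simp [hx, hy]
  | mul x y _ _ hx hy => simp [hx, hy]

lemma bind₁_mem_supported {s : Set (Fin n)} (g : Fin n → MvPolynomial (Fin n) k)
    (hg : ∀ j ∈ s, g j ∈ supported k s) {p : MvPolynomial (Fin n) k} (hp : p ∈ supported k s) :
    bind₁ g p ∈ supported k s := by
  rw [supported_eq_adjoin_X] at hp
  induction hp using Algebra.adjoin_induction with
  | mem x hx =>
      obtain ⟨j, hj, rfl⟩ := hx
      rw [bind₁_X_right]; exact hg j hj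
  | algebraMap r => simpa using Subalgebra.algebraMap_mem (supported k s) r
  | add x y _ _ hx hy => rw [map_add]; exact add_mem hx hy
  | mul x y _ _ hx hy => rw [map_mul]; exact mul_mem hx hy

lemma translEnd_mem_supported {s : Set (Fin n)} (c : Fin n → k)
    {p : MvPolynomial (Fin n) k} (hp : p ∈ supported k s) :
    bind₁ (translEnd c) p ∈ supported k s := by
  refine bind₁_mem_supported _ (fun j hj => ?_) hp
  show X j + C (c j) ∈ supported k s
  exact add_mem (X_mem_supported.2 hj) (Subalgebra.algebraMap_mem _ _)

lemma pderiv_eq_zero_of_supported {s : Set (Fin n)} {p : MvPolynomial (Fin n) k}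
    (hp : p ∈ supported k s) {i : Fin n} (hi : i ∉ s) : pderiv i p = 0 :=
  pderiv_eq_zero_of_notMem_vars (fun h => hi (mem_supported.1 hp h))

/-- The elementary automorphism adding a polynomial `P` (not involving `X i0`) to `X i0`. -/
noncomputable def shiftEnd (i0 : Fin n) (P : MvPolynomial (Fin n) k) : PolyEnd k n :=
  fun i => if i = i0 then X i0 + P else X i

@[simp] lemma shiftEnd_same (i0 : Fin n) (P : MvPolynomial (Fin n) k) :
    shiftEnd i0 P i0 = X i0 + P := if_pos rfl

lemma shiftEnd_ne (i0 : Fin n) (P : MvPolynomial (Fin n) k) {i : Fin n} (h : i ≠ i0) :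
    shiftEnd i0 P i = X i := if_neg h

lemma shiftEnd_mul (i0 : Fin n) {P Q : MvPolynomial (Fin n) k}
    (hP : P ∈ supported k {j | j ≠ i0}) :
    shiftEnd i0 P * shiftEnd i0 Q = shiftEnd i0 (P + Q) := by
  funext i
  show bind₁ (shiftEnd i0 Q) (shiftEnd i0 P i) = shiftEnd i0 (P + Q) i
  have hQ' : bind₁ (shiftEnd i0 Q) P = P :=
    bind₁_eq_self_of_supported _ (fun j hj => if_neg hj) hP
  by_cases h : i = i0
  · subst h
    rw [shiftEnd_same, shiftEnd_same, map_add, bind₁_X_right_pe, hQ', shiftEnd_same]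
    ring
  · rw [shiftEnd_ne i0 P h, bind₁_X_right_pe, shiftEnd_ne i0 Q h, shiftEnd_ne i0 _ h]

lemma shiftEnd_zero (i0 : Fin n) : shiftEnd i0 (0 : MvPolynomial (Fin n) k) = 1 := by
  funext i
  show (if i = i0 then X i0 + 0 else X i) = X i
  by_cases h : i = i0 <;> simp [h]

lemma jac_shiftEnd (i0 : Fin n) {P : MvPolynomial (Fin n) k}
    (hP : P ∈ supported k {j | j ≠ i0}) : PolyEnd.jac (shiftEnd i0 P) = 1 := by
  unfold PolyEnd.jac
  have hM : (Matrix.of fun i j => pderiv j (shiftEnd i0 P i))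
      = Matrix.updateRow (1 : Matrix (Fin n) (Fin n) (MvPolynomial (Fin n) k)) i0
          ((1 : Matrix (Fin n) (Fin n) (MvPolynomial (Fin n) k)) i0 + fun j => pderiv j P) := by
    ext i j
    by_cases h : i = i0
    · subst h
      rw [Matrix.of_apply, shiftEnd_same, Matrix.updateRow_self, map_add]
      simp [Matrix.one_apply, pderiv_X, Pi.single_apply, eq_comm]
    · rw [Matrix.of_apply, shiftEnd_ne i0 P h, Matrix.updateRow_ne h]
      simp [Matrix.one_apply, pderiv_X, Pi.single_apply, eq_comm]
  rw [hM, Matrix.det_updateRow_add, Matrix.updateRow_eq_self, Matrix.det_one]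
  have : (Matrix.updateRow (1 : Matrix (Fin n) (Fin n) (MvPolynomial (Fin n) k)) i0
      (fun j => pderiv j P)).det = 0 := by
    apply Matrix.det_eq_zero_of_column_eq_zero i0
    intro i
    by_cases h : i = i0
    · subst h
      rw [Matrix.updateRow_self]
      exact pderiv_eq_zero_of_supported hP (by simp)
    · rw [Matrix.updateRow_ne h, Matrix.one_apply_ne h]
  rw [this, add_zero]

/-- The shift automorphism as a unit. -/
noncomputable def shiftAut (i0 : Fin n) (P : MvPolynomial (Fin n) k)
    (hP : P ∈ supported k {j | j ≠ i0}) : PolyAut k n where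
  val := shiftEnd i0 P
  inv := shiftEnd i0 (-P)
  val_inv := by rw [shiftEnd_mul i0 hP, add_neg_cancel, shiftEnd_zero]
  inv_val := by rw [shiftEnd_mul i0 (neg_mem hP), neg_add_cancel, shiftEnd_zero]

/-- The shift automorphism as an element of `SAut`. -/
noncomputable def shiftS (i0 : Fin n) (P : MvPolynomial (Fin n) k)
    (hP : P ∈ supported k {j | j ≠ i0}) : ↥(SAutGrp k n) :=
  ⟨shiftAut i0 P hP, jac_shiftEnd i0 hP⟩

@[simp] lemma coe_shiftS (i0 : Fin n) (P : MvPolynomial (Fin n) k) (hP) :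
    ((shiftS i0 P hP : PolyAut k n) : PolyEnd k n) = shiftEnd i0 P := rfl

lemma shiftS_mul (i0 : Fin n) {P Q : MvPolynomial (Fin n) k} (hP) (hQ) :
    shiftS i0 P hP * shiftS i0 Q hQ = shiftS i0 (P + Q) (add_mem hP hQ) :=
  SAut_ext (shiftEnd_mul i0 hP)

lemma shiftS_inv (i0 : Fin n) {P : MvPolynomial (Fin n) k} (hP) :
    (shiftS i0 P hP)⁻¹ = shiftS i0 (-P) (neg_mem hP) :=
  SAut_ext rfl

lemma translS_mul (c d : Fin n → k) : translS c * translS d = translS (c + d) :=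
  SAut_ext (translEnd_mul c d)

lemma shiftS_C (i0 : Fin n) (r : k) :
    shiftS i0 (C r) (Subalgebra.algebraMap_mem _ r) = translS (Pi.single i0 r) := by
  apply SAut_ext
  show shiftEnd i0 (C r) = translEnd (Pi.single i0 r)
  funext i
  by_cases h : i = i0
  · rw [h, shiftEnd_same]
    show X i0 + C r = X i0 + C ((Pi.single i0 r : Fin n → k) i0)
    rw [Pi.single_eq_same]
  · rw [shiftEnd_ne i0 _ h]
    show X i = X i + C ((Pi.single i0 r : Fin n → k) i)
    rw [Pi.single_eq_of_ne h, map_zero, add_zero]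

end Aux1


section Aux2

variable {k : Type*} [Field k] {n : ℕ}

@[simp] lemma translEnd_apply (c : Fin n → k) (i : Fin n) :
    translEnd c i = X i + C (c i) := rfl

lemma bind₁_CXpow (c : Fin n → k) (b : k) (j : Fin n) (m : ℕ) :
    bind₁ (translEnd c) (C b * X j ^ m) = C b * (X j + C (c j)) ^ m := by
  rw [map_mul (bind₁ (translEnd c)), map_pow (bind₁ (translEnd c)), bind₁_C_right_pe,
    bind₁_X_right_pe, translEnd_apply]

lemma bind₁_CXX (c : Fin n → k) (b : k) (j l : Fin n) :
    bind₁ (translEnd c) (C b * (X j * X l))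
      = C b * ((X j + C (c j)) * (X l + C (c l))) := by
  rw [map_mul (bind₁ (translEnd c)), map_mul (bind₁ (translEnd c)), bind₁_C_right_pe,
    bind₁_X_right_pe, bind₁_X_right_pe, translEnd_apply, translEnd_apply]

lemma shift_conj_end (i0 : Fin n) {P : MvPolynomial (Fin n) k}
    (hP : P ∈ supported k {j | j ≠ i0}) (c : Fin n → k) :
    shiftEnd i0 P * translEnd c * shiftEnd i0 (-P) * translEnd (-c)
      = shiftEnd i0 (P - bind₁ (translEnd (-c)) P) := by
  have hshift : ∀ {q : MvPolynomial (Fin n) k}, q ∈ supported k {j | j ≠ i0} →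
      bind₁ (shiftEnd i0 (-P)) q = q :=
    fun hq => bind₁_eq_self_of_supported _ (fun j hj => shiftEnd_ne i0 _ hj) hq
  have hPc : bind₁ (translEnd c) P ∈ supported k {j | j ≠ i0} := translEnd_mem_supported c hP
  have hback : bind₁ (translEnd (-c)) (bind₁ (translEnd c) P) = P := by
    rw [bind₁_bind₁_pe]
    have h1 : (fun i => bind₁ (translEnd (-c)) (translEnd c i))
        = (X : Fin n → MvPolynomial (Fin n) k) := by
      funext i
      rw [translEnd_apply, map_add, bind₁_X_right_pe, bind₁_C_right_pe, translEnd_apply,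
        Pi.neg_apply, map_neg]
      ring
    rw [h1, bind₁_X_left, AlgHom.id_apply]
  funext i
  show bind₁ (translEnd (-c)) (bind₁ (shiftEnd i0 (-P)) (bind₁ (translEnd c) (shiftEnd i0 P i)))
      = shiftEnd i0 (P - bind₁ (translEnd (-c)) P) i
  by_cases h : i = i0
  · rw [h]
    simp only [shiftEnd_same, map_add, bind₁_X_right_pe, bind₁_C_right_pe, translEnd_apply,
      hshift hPc, map_neg, hback, Pi.neg_apply, map_neg]
    ring
  · have hX : ∀ Q : MvPolynomial (Fin n) k, shiftEnd i0 Q i = X i :=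
      fun Q => shiftEnd_ne i0 Q h
    simp only [hX, map_add, bind₁_X_right_pe, bind₁_C_right_pe, translEnd_apply, Pi.neg_apply,
      map_neg]
    ring

lemma shiftS_congr (i0 : Fin n) {P P' : MvPolynomial (Fin n) k} (h : P = P') (hP) (hP') :
    shiftS i0 P hP = shiftS i0 P' hP' := by subst h; rfl

lemma shiftS_conj_mem (N : Subgroup ↥(SAutGrp k n)) (hN : N.Normal)
    (htr : ∀ c : Fin n → k, translS c ∈ N) (i0 : Fin n) {P : MvPolynomial (Fin n) k}
    (hP : P ∈ supported k {j | j ≠ i0}) (c : Fin n → k) :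
    shiftS i0 (P - bind₁ (translEnd c) P)
      (sub_mem hP (translEnd_mem_supported c hP)) ∈ N := by
  have h0 := shift_conj_end i0 hP (-c)
  have key : shiftS i0 P hP * translS (-c) * (shiftS i0 P hP)⁻¹ * (translS (-c))⁻¹
      = shiftS i0 (P - bind₁ (translEnd (-(-c))) P)
        (sub_mem hP (translEnd_mem_supported (-(-c)) hP)) := SAut_ext h0
  have key2 : shiftS i0 (P - bind₁ (translEnd (-(-c))) P)
        (sub_mem hP (translEnd_mem_supported (-(-c)) hP))
      = shiftS i0 (P - bind₁ (translEnd c) P)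
        (sub_mem hP (translEnd_mem_supported c hP)) :=
    shiftS_congr i0 (by rw [neg_neg]) _ _
  rw [← key2, ← key]
  exact N.mul_mem (hN.conj_mem _ (htr (-c)) _) (N.inv_mem (htr (-c)))

lemma CX_mem (i0 j : Fin n) (hj : j ≠ i0) (b : k) :
    C b * X j ∈ supported k {l : Fin n | l ≠ i0} :=
  mul_mem (Subalgebra.algebraMap_mem _ b) (X_mem_supported.2 hj)

lemma CXpow_mem (i0 j : Fin n) (hj : j ≠ i0) (b : k) (m : ℕ) :
    C b * X j ^ m ∈ supported k {l : Fin n | l ≠ i0} := by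
  refine mul_mem (Subalgebra.algebraMap_mem _ b) ?_
  induction m with
  | zero => simpa using one_mem (supported k {l : Fin n | l ≠ i0})
  | succ m ih => rw [pow_succ]; exact mul_mem ih (X_mem_supported.2 hj)

/-- Removing a constant from a shift already in `N`. -/
lemma shiftS_mem_of_add_C (N : Subgroup ↥(SAutGrp k n))
    (htr : ∀ c : Fin n → k, translS c ∈ N) (i0 : Fin n) {Q : MvPolynomial (Fin n) k}
    (hQ : Q ∈ supported k {l | l ≠ i0}) (r : k)
    (h : shiftS i0 (Q + C r) (add_mem hQ (Subalgebra.algebraMap_mem _ r)) ∈ N) :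
    shiftS i0 Q hQ ∈ N := by
  have hC : shiftS i0 (C (-r)) (Subalgebra.algebraMap_mem _ (-r)) ∈ N := by
    rw [shiftS_C i0 (-r)]
    exact htr _
  have hmul := N.mul_mem h hC
  erw [shiftS_mul] at hmul
  rwa [shiftS_congr i0 (show Q + C r + C (-r) = Q by rw [map_neg]; ring) _ hQ] at hmul

/-- The three-variable construction of shears inside `N`. -/
lemma shear_mem_of_third (N : Subgroup ↥(SAutGrp k n)) (hN : N.Normal)
    (htr : ∀ c : Fin n → k, translS c ∈ N) (i0 j l : Fin n)
    (hj : j ≠ i0) (hl : l ≠ i0) (hlj : l ≠ j) (b : k) :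
    shiftS i0 (C b * X j) (CX_mem i0 j hj b) ∈ N := by
  have hP : C (-b) * (X j * X l) ∈ supported k {m : Fin n | m ≠ i0} :=
    mul_mem (Subalgebra.algebraMap_mem _ _)
      (mul_mem (X_mem_supported.2 hj) (X_mem_supported.2 hl))
  have h := shiftS_conj_mem N hN htr i0 hP (Pi.single l 1)
  have heq : C (-b) * (X j * X l)
      - bind₁ (translEnd (Pi.single l 1)) (C (-b) * (X j * X l)) = C b * X j := by
    rw [bind₁_CXX, Pi.single_eq_same, Pi.single_eq_of_ne (Ne.symm hlj), map_zero, map_one,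
      map_neg]
    ring
  rwa [shiftS_congr i0 heq _ (CX_mem i0 j hj b)] at h

/-- The quadratic construction of shears inside `N`, in characteristic different from `2`. -/
lemma shear_mem_of_two_ne_zero (N : Subgroup ↥(SAutGrp k n)) (hN : N.Normal)
    (htr : ∀ c : Fin n → k, translS c ∈ N) (h2 : (2 : k) ≠ 0) (i0 j : Fin n)
    (hj : j ≠ i0) (b : k) :
    shiftS i0 (C b * X j) (CX_mem i0 j hj b) ∈ N := by
  set a := b / 2 with ha
  have hP : C (-a) * X j ^ 2 ∈ supported k {m : Fin n | m ≠ i0} := CXpow_mem i0 j hj (-a) 2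
  have h := shiftS_conj_mem N hN htr i0 hP (Pi.single j 1)
  have heq : C (-a) * X j ^ 2 - bind₁ (translEnd (Pi.single j 1)) (C (-a) * X j ^ 2)
      = C (2 * a) * X j + C a := by
    rw [bind₁_CXpow, Pi.single_eq_same, map_one, map_neg, map_mul, map_ofNat]
    ring
  rw [shiftS_congr i0 heq _ (add_mem (CX_mem i0 j hj (2*a)) (Subalgebra.algebraMap_mem _ a))] at h
  have h' := shiftS_mem_of_add_C N htr i0 (CX_mem i0 j hj (2*a)) a h
  have hb : 2 * a = b := by rw [ha]; field_simp
  rwa [shiftS_congr i0 (by rw [hb]) (CX_mem i0 j hj (2*a)) (CX_mem i0 j hj b)] at h'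

/-- The cubic construction of shears inside `N`. -/
lemma shear_mem_cubic (N : Subgroup ↥(SAutGrp k n)) (hN : N.Normal)
    (htr : ∀ c : Fin n → k, translS c ∈ N) (i0 j : Fin n) (hj : j ≠ i0)
    (lam : k) (hden : (3 : k) * lam * (lam - 1) ≠ 0) (b : k) :
    shiftS i0 (C b * X j) (CX_mem i0 j hj b) ∈ N := by
  set cq := b / ((3 : k) * lam * (lam - 1)) with hcq
  have hP1 : C (cq * lam) * X j ^ 3 ∈ supported k {m : Fin n | m ≠ i0} :=
    CXpow_mem i0 j hj _ 3
  have h1 := shiftS_conj_mem N hN htr i0 hP1 (Pi.single j 1)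
  have hP2 : C cq * X j ^ 3 ∈ supported k {m : Fin n | m ≠ i0} := CXpow_mem i0 j hj _ 3
  have h2 := shiftS_conj_mem N hN htr i0 hP2 (Pi.single j lam)
  have hcomb := N.mul_mem h1 (N.inv_mem h2)
  rw [shiftS_inv, shiftS_mul] at hcomb
  have heq : C (cq * lam) * X j ^ 3
        - bind₁ (translEnd (Pi.single j 1)) (C (cq * lam) * X j ^ 3)
        + -(C cq * X j ^ 3 - bind₁ (translEnd (Pi.single j lam)) (C cq * X j ^ 3))
      = C b * X j + C (cq * lam * (lam * lam - 1)) := by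
    rw [bind₁_CXpow, bind₁_CXpow, Pi.single_eq_same, Pi.single_eq_same, map_one]
    have hb : (C b : MvPolynomial (Fin n) k) = C ((3 : k) * lam * (lam - 1)) * C cq := by
      rw [← map_mul]
      congr 1
      rw [hcq]
      field_simp
      exact (eq_div_iff hden).2 (by ring)
    rw [hb]
    simp only [map_mul, map_sub, map_one, map_ofNat]
    ring
  rw [shiftS_congr i0 heq _
    (add_mem (CX_mem i0 j hj b) (Subalgebra.algebraMap_mem _ _))] at hcomb
  exact shiftS_mem_of_add_C N htr i0 (CX_mem i0 j hj b) _ hcomb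

/-- `Nat.card k = 2` iff the elements of `k` are exactly `0` and `1`. -/
lemma card_two_iff_all_zero_or_one :
    Nat.card k = 2 ↔ ∀ x : k, x = 0 ∨ x = 1 := by
  constructor
  · intro hcard x
    obtain ⟨a, b, hab, huniv⟩ := Nat.card_eq_two_iff.1 hcard
    have hx : x ∈ ({a, b} : Set k) := huniv ▸ Set.mem_univ x
    have h0 : (0 : k) ∈ ({a, b} : Set k) := huniv ▸ Set.mem_univ 0
    have h1 : (1 : k) ∈ ({a, b} : Set k) := huniv ▸ Set.mem_univ 1
    simp only [Set.mem_insert_iff, Set.mem_singleton_iff] at hx h0 h1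
    rcases h0 with h0 | h0 <;> rcases h1 with h1 | h1
    · exact absurd (h0.trans h1.symm) zero_ne_one
    · rcases hx with hx | hx
      · exact Or.inl (hx.trans h0.symm)
      · exact Or.inr (hx.trans h1.symm)
    · rcases hx with hx | hx
      · exact Or.inr (hx.trans h1.symm)
      · exact Or.inl (hx.trans h0.symm)
    · exact absurd (h0.trans h1.symm) zero_ne_one
  · intro hall
    refine Nat.card_eq_two_iff.2 ⟨0, 1, zero_ne_one, ?_⟩
    ext x
    simp only [Set.mem_insert_iff, Set.mem_singleton_iff, Set.mem_univ, iff_true]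
    exact hall x

/-- All shears lie in `N`, outside the exceptional case. -/
lemma shear_mem (N : Subgroup ↥(SAutGrp k n)) (hN : N.Normal)
    (htr : ∀ c : Fin n → k, translS c ∈ N)
    (hcase : ¬(Nat.card k = 2 ∧ n = 2)) (i0 j : Fin n) (hj : j ≠ i0) (b : k) :
    shiftS i0 (C b * X j) (CX_mem i0 j hj b) ∈ N := by
  by_cases hex : ∃ l : Fin n, l ≠ i0 ∧ l ≠ j
  · obtain ⟨l, hl, hlj⟩ := hex
    exact shear_mem_of_third N hN htr i0 j l hj hl hlj b
  · by_cases h2 : (2 : k) = 0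
    · have h3 : (3 : k) = 1 := by
        have h23 : (3 : k) = 2 + 1 := by norm_num
        rw [h23, h2, zero_add]
      have hn2 : n = 2 := by
        push_neg at hex
        have hle : (Finset.univ : Finset (Fin n)).card ≤ ({i0, j} : Finset (Fin n)).card := by
          apply Finset.card_le_card
          intro l _
          rcases eq_or_ne l i0 with h | h
          · simp [h]
          · simp [hex l h]
        have hcard2 : ({i0, j} : Finset (Fin n)).card ≤ 2 :=
          (Finset.card_insert_le _ _).trans (by simp)
        have hnle : n ≤ 2 := by simpa using hle.trans hcard2
        have hge : 2 ≤ n := by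
          by_contra hlt
          push_neg at hlt
          interval_cases n
          · exact absurd i0.pos (by simp)
          · exact hj (Subsingleton.elim j i0)
        omega
      have hcardk : Nat.card k ≠ 2 := fun hk => hcase ⟨hk, hn2⟩
      have hlam : ∃ lam : k, lam ≠ 0 ∧ lam ≠ 1 := by
        by_contra hno
        push_neg at hno
        apply hcardk
        rw [card_two_iff_all_zero_or_one]
        intro x
        rcases eq_or_ne x 0 with h | h
        · exact Or.inl h
        · exact Or.inr (hno x h)
      obtain ⟨lam, hl0, hl1⟩ := hlam
      apply shear_mem_cubic N hN htr i0 j hj lam _ b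
      rw [h3, one_mul]
      exact mul_ne_zero hl0 (sub_ne_zero.2 hl1)
    · exact shear_mem_of_two_ne_zero N hN htr h2 i0 j hj b

end Aux2



section Aux3

variable {k : Type*} [Field k] {n : ℕ}

lemma linEnd_one : linEnd (1 : Matrix (Fin n) (Fin n) k) = (1 : PolyEnd k n) := by
  funext i
  show ∑ j, C ((1 : Matrix (Fin n) (Fin n) k) i j) * X j = X i
  rw [Finset.sum_eq_single i]
  · rw [Matrix.one_apply_eq, map_one, one_mul]
  · intro j _ hj
    rw [Matrix.one_apply_ne (Ne.symm hj), map_zero, zero_mul]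
  · intro h
    exact absurd (Finset.mem_univ i) h

lemma linEnd_mul (M M' : Matrix (Fin n) (Fin n) k) :
    linEnd M * linEnd M' = linEnd (M * M') := by
  funext i
  show bind₁ (linEnd M') (linEnd M i) = linEnd (M * M') i
  have lhs : bind₁ (linEnd M') (linEnd M i)
      = ∑ j, ∑ l, C (M i j) * (C (M' j l) * X l) := by
    rw [show linEnd M i = ∑ j, C (M i j) * X j from rfl, map_sum]
    refine Finset.sum_congr rfl fun j _ => ?_
    rw [map_mul (bind₁ (linEnd M')), bind₁_C_right_pe, bind₁_X_right_pe,
      show linEnd M' j = ∑ l, C (M' j l) * X l from rfl, Finset.mul_sum]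
  have rhs : linEnd (M * M') i = ∑ l, ∑ j, C (M i j) * (C (M' j l) * X l) := by
    rw [show linEnd (M * M') i = ∑ l, C ((M * M') i l) * X l from rfl]
    refine Finset.sum_congr rfl fun l _ => ?_
    rw [Matrix.mul_apply, map_sum, Finset.sum_mul]
    refine Finset.sum_congr rfl fun j _ => ?_
    rw [map_mul, mul_assoc]
  rw [lhs, rhs, Finset.sum_comm]

lemma jac_linEnd (M : Matrix (Fin n) (Fin n) k) :
    PolyEnd.jac (linEnd M) = C M.det := by
  unfold PolyEnd.jac
  have hM : (Matrix.of fun i j => pderiv j (linEnd M i))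
      = M.map (C : k → MvPolynomial (Fin n) k) := by
    ext i j
    rw [Matrix.of_apply, show linEnd M i = ∑ l, C (M i l) * X l from rfl, map_sum,
      Finset.sum_eq_single j]
    · rw [pderiv_mul, pderiv_C, pderiv_X_self, mul_one, zero_mul, zero_add, Matrix.map_apply]
    · intro l _ hl
      rw [pderiv_mul, pderiv_C, pderiv_X, Pi.single_eq_of_ne hl, zero_mul, mul_zero, add_zero]
    · intro h
      exact absurd (Finset.mem_univ j) h
  rw [hM]
  exact ((C : k →+* MvPolynomial (Fin n) k).map_det M).symm

/-- The linear automorphism attached to a matrix of determinant 1. -/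
noncomputable def linAut (M : Matrix (Fin n) (Fin n) k) (hdet : M.det = 1) : PolyAut k n where
  val := linEnd M
  inv := linEnd M⁻¹
  val_inv := by
    rw [linEnd_mul, Matrix.mul_nonsing_inv _ (by rw [hdet]; exact isUnit_one), linEnd_one]
  inv_val := by
    rw [linEnd_mul, Matrix.nonsing_inv_mul _ (by rw [hdet]; exact isUnit_one), linEnd_one]

/-- The linear automorphism attached to a matrix of determinant 1, in `SAut`. -/
noncomputable def linS (M : Matrix (Fin n) (Fin n) k) (hdet : M.det = 1) : ↥(SAutGrp k n) :=
  ⟨linAut M hdet, show PolyEnd.jac (linEnd M) = 1 by rw [jac_linEnd, hdet, map_one]⟩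

/-- `M` has determinant 1 and its linear automorphism lies in `N`. -/
def InN (N : Subgroup ↥(SAutGrp k n)) (M : Matrix (Fin n) (Fin n) k) : Prop :=
  ∃ hdet : M.det = 1, linS M hdet ∈ N

lemma InN_one (N : Subgroup ↥(SAutGrp k n)) : InN N 1 := by
  refine ⟨Matrix.det_one, ?_⟩
  have : linS (1 : Matrix (Fin n) (Fin n) k) Matrix.det_one = 1 := SAut_ext (by
    show linEnd (1 : Matrix (Fin n) (Fin n) k) = ((1 : PolyAut k n) : PolyEnd k n)
    rw [linEnd_one]; rfl)
  rw [this]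
  exact N.one_mem

lemma InN_mul {N : Subgroup ↥(SAutGrp k n)} {M M' : Matrix (Fin n) (Fin n) k}
    (h : InN N M) (h' : InN N M') : InN N (M * M') := by
  obtain ⟨hdet, hmem⟩ := h
  obtain ⟨hdet', hmem'⟩ := h'
  refine ⟨by rw [Matrix.det_mul, hdet, hdet', one_mul], ?_⟩
  have : linS M hdet * linS M' hdet' = linS (M * M') (by rw [Matrix.det_mul, hdet, hdet', one_mul]) :=
    SAut_ext (linEnd_mul M M')
  rw [← this]
  exact N.mul_mem hmem hmem'

lemma InN_inv {N : Subgroup ↥(SAutGrp k n)} {M : Matrix (Fin n) (Fin n) k}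
    (h : InN N M) : InN N M⁻¹ := by
  obtain ⟨hdet, hmem⟩ := h
  have hdet' : M⁻¹.det = 1 := by
    rw [Matrix.det_nonsing_inv, hdet]; simp
  refine ⟨hdet', ?_⟩
  have : (linS M hdet)⁻¹ = linS M⁻¹ hdet' := SAut_ext rfl
  rw [← this]
  exact N.inv_mem hmem

lemma linEnd_transvection (i j : Fin n) (hij : i ≠ j) (c : k) :
    linEnd (Matrix.transvection i j c) = shiftEnd i (C c * X j) := by
  funext p
  show ∑ l, C (Matrix.transvection i j c p l) * X l = shiftEnd i (C c * X j) p
  have hsplit : ∀ l, (Matrix.transvection i j c) p l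
      = (1 : Matrix (Fin n) (Fin n) k) p l + Matrix.single i j c p l := fun l => rfl
  have h1 : ∑ l, C ((1 : Matrix (Fin n) (Fin n) k) p l) * X l = X p := by
    exact congrFun (linEnd_one (k := k) (n := n)) p
  by_cases hp : p = i
  · subst hp
    rw [shiftEnd_same]
    calc ∑ l, C (Matrix.transvection p j c p l) * X l
        = ∑ l, (C ((1 : Matrix (Fin n) (Fin n) k) p l) * X l
            + C (Matrix.single p j c p l) * X l) := by
          refine Finset.sum_congr rfl fun l _ => ?_
          rw [hsplit l, map_add, add_mul]
      _ = X p + C c * X j := by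
          rw [Finset.sum_add_distrib, h1]
          congr 1
          rw [Finset.sum_eq_single j]
          · rw [Matrix.single_apply_same (α := k)]
          · intro l _ hl
            rw [Matrix.single_apply_of_ne p j c p l (by tauto), map_zero, zero_mul]
          · intro h; exact absurd (Finset.mem_univ j) h
  · rw [shiftEnd_ne i _ hp]
    calc ∑ l, C (Matrix.transvection i j c p l) * X l
        = ∑ l, (C ((1 : Matrix (Fin n) (Fin n) k) p l) * X l
            + C (Matrix.single i j c p l) * X l) := by
          refine Finset.sum_congr rfl fun l _ => ?_
          rw [hsplit l, map_add, add_mul]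
      _ = X p := by
          rw [Finset.sum_add_distrib, h1]
          have : ∀ l, C (Matrix.single i j c p l) * X l = 0 := fun l => by
            rw [Matrix.single_apply_of_ne i j c p l (by tauto), map_zero, zero_mul]
          rw [Finset.sum_congr rfl fun l _ => this l]
          simp

lemma InN_transvection (N : Subgroup ↥(SAutGrp k n)) (hN : N.Normal)
    (htr : ∀ c : Fin n → k, translS c ∈ N) (hcase : ¬(Nat.card k = 2 ∧ n = 2))
    (i j : Fin n) (hij : i ≠ j) (c : k) : InN N (Matrix.transvection i j c) := by
  have hdet : (Matrix.transvection i j c).det = 1 := Matrix.det_transvection_of_ne i j hij c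
  refine ⟨hdet, ?_⟩
  have : linS (Matrix.transvection i j c) hdet
      = shiftS i (C c * X j) (CX_mem i j (Ne.symm hij) c) :=
    SAut_ext (linEnd_transvection i j hij c)
  rw [this]
  exact shear_mem N hN htr hcase i j (Ne.symm hij) c

lemma InN_listprod (N : Subgroup ↥(SAutGrp k n)) (hN : N.Normal)
    (htr : ∀ c : Fin n → k, translS c ∈ N) (hcase : ¬(Nat.card k = 2 ∧ n = 2))
    (L : List (Matrix.TransvectionStruct (Fin n) k)) :
    InN N (L.map Matrix.TransvectionStruct.toMatrix).prod := by
  induction L with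
  | nil => simpa using InN_one N
  | cons t L ih =>
      rw [List.map_cons, List.prod_cons]
      exact InN_mul (InN_transvection N hN htr hcase t.i t.j t.hij t.c) ih

end Aux3


section Aux4

variable {k : Type*} [Field k] {n : ℕ}

lemma std_neg (p q : Fin n) (x : k) :
    Matrix.single p q (-x) = -Matrix.single p q x := by
  calc Matrix.single p q (-x) = Matrix.single p q ((-1 : k) • x) := by
        rw [neg_one_smul]
    _ = (-1 : k) • Matrix.single p q x := (Matrix.smul_single _ _ _ _).symm
    _ = -Matrix.single p q x := by rw [neg_one_smul]

lemma mul3_expand (A B C : Matrix (Fin n) (Fin n) k) :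
    (1 + A) * (1 + B) * (1 + C) = 1 + A + B + C + A*B + A*C + B*C + A*B*C := by
  noncomm_ring

lemma mul5_expand (A B C D A' B' C' D' : Matrix (Fin n) (Fin n) k) :
    (1 + A + B + C + D) * (1 + A' + B' + C' + D')
      = 1 + A + B + C + D + A' + B' + C' + D'
        + A*A' + A*B' + A*C' + A*D'
        + B*A' + B*B' + B*C' + B*D'
        + C*A' + C*B' + C*C' + C*D'
        + D*A' + D*B' + D*C' + D*D' := by
  noncomm_ring

lemma transvection_triple (i j : Fin n) (hij : i ≠ j) (u v : k) (huv : u * v = 1) :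
    Matrix.transvection i j u * Matrix.transvection j i (-v) * Matrix.transvection i j u
      = 1 + Matrix.single i i (-1) + Matrix.single j j (-1)
        + Matrix.single i j u + Matrix.single j i (-v) := by
  show (1 + Matrix.single i j u) * (1 + Matrix.single j i (-v))
      * (1 + Matrix.single i j u) = _
  rw [mul3_expand]
  have hAB : Matrix.single i j u * Matrix.single j i (-v)
      = Matrix.single i i (-1) := by
    rw [Matrix.single_mul_single_same, mul_neg, huv]
  have hAC : Matrix.single i j u * Matrix.single i j u = 0 :=
    Matrix.single_mul_single_of_ne (c := u) i j _ (Ne.symm hij) u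
  have hBC : Matrix.single j i (-v) * Matrix.single i j u
      = Matrix.single j j (-1) := by
    rw [Matrix.single_mul_single_same, neg_mul, mul_comm v u, huv]
  have hABC : Matrix.single i j u * Matrix.single j i (-v)
      * Matrix.single i j u = Matrix.single i j (-u) := by
    rw [hAB, Matrix.single_mul_single_same, neg_one_mul]
  rw [hABC, hAB, hAC, hBC]
  simp only [std_neg]
  abel

lemma diagonal_pair (i j : Fin n) (hij : i ≠ j) (a b : k) :
    (1 : Matrix (Fin n) (Fin n) k) + Matrix.single i i (a - 1)
        + Matrix.single j j (b - 1)
      = Matrix.diagonal (fun l => if l = i then a else if l = j then b else 1) := by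
  ext p q
  rcases eq_or_ne p q with rfl | hpq
  · rcases eq_or_ne p i with rfl | hpi
    · rw [Matrix.add_apply, Matrix.add_apply, Matrix.one_apply_eq,
        Matrix.single_apply_same (α := k),
        Matrix.single_apply_of_ne j j (b - 1) p p
          (by rintro ⟨h1, _⟩; exact hij h1.symm),
        Matrix.diagonal_apply_eq, if_pos rfl]
      ring
    · rcases eq_or_ne p j with rfl | hpj
      · rw [Matrix.add_apply, Matrix.add_apply, Matrix.one_apply_eq,
          Matrix.single_apply_of_ne i i (a - 1) p p
            (by rintro ⟨h1, _⟩; exact hpi h1.symm),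
          Matrix.single_apply_same (α := k),
          Matrix.diagonal_apply_eq, if_neg hpi, if_pos rfl]
        ring
      · rw [Matrix.add_apply, Matrix.add_apply, Matrix.one_apply_eq,
          Matrix.single_apply_of_ne i i (a - 1) p p
            (by rintro ⟨h1, _⟩; exact hpi h1.symm),
          Matrix.single_apply_of_ne j j (b - 1) p p
            (by rintro ⟨h1, _⟩; exact hpj h1.symm),
          Matrix.diagonal_apply_eq, if_neg hpi, if_neg hpj]
        ring
  · rw [Matrix.add_apply, Matrix.add_apply, Matrix.one_apply_ne hpq,
      Matrix.single_apply_of_ne i i (a - 1) p q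
        (by rintro ⟨h1, h2⟩; exact hpq (h1.symm.trans h2)),
      Matrix.single_apply_of_ne j j (b - 1) p q
        (by rintro ⟨h1, h2⟩; exact hpq (h1.symm.trans h2)),
      Matrix.diagonal_apply_ne _ hpq]
    ring

lemma whitehead (i j : Fin n) (hij : i ≠ j) (a : k) (ha : a ≠ 0) :
    Matrix.transvection i j a * Matrix.transvection j i (-a⁻¹) * Matrix.transvection i j a
      * (Matrix.transvection i j (-1) * Matrix.transvection j i 1 * Matrix.transvection i j (-1))
    = Matrix.diagonal (fun l => if l = i then a else if l = j then a⁻¹ else 1) := by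
  have h1 := transvection_triple i j hij a a⁻¹ (mul_inv_cancel₀ ha)
  have h2 := transvection_triple i j hij (-1 : k) (-1) (by ring)
  simp only [neg_neg] at h2
  rw [h1, h2, mul5_expand, ← diagonal_pair i j hij]
  have m1 : Matrix.single i i (-1 : k) * Matrix.single i i (-1)
      = Matrix.single i i (1 : k) := by
    rw [Matrix.single_mul_single_same]; norm_num
  have m2 : Matrix.single i i (-1 : k) * Matrix.single j j (-1) = 0 :=
    Matrix.single_mul_single_of_ne (c := (-1)) i i _ hij (-1)
  have m3 : Matrix.single i i (-1 : k) * Matrix.single i j (-1)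
      = Matrix.single i j (1 : k) := by
    rw [Matrix.single_mul_single_same]; norm_num
  have m4 : Matrix.single i i (-1 : k) * Matrix.single j i 1 = 0 :=
    Matrix.single_mul_single_of_ne (c := (-1)) i i _ hij 1
  have m5 : Matrix.single j j (-1 : k) * Matrix.single i i (-1) = 0 :=
    Matrix.single_mul_single_of_ne (c := (-1)) j j _ (Ne.symm hij) (-1)
  have m6 : Matrix.single j j (-1 : k) * Matrix.single j j (-1)
      = Matrix.single j j (1 : k) := by
    rw [Matrix.single_mul_single_same]; norm_num
  have m7 : Matrix.single j j (-1 : k) * Matrix.single i j (-1) = 0 :=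
    Matrix.single_mul_single_of_ne (c := (-1)) j j _ (Ne.symm hij) (-1)
  have m8 : Matrix.single j j (-1 : k) * Matrix.single j i 1
      = Matrix.single j i (-1 : k) := by
    rw [Matrix.single_mul_single_same]; norm_num
  have m9 : Matrix.single i j a * Matrix.single i i (-1) = 0 :=
    Matrix.single_mul_single_of_ne (c := a) i j _ (Ne.symm hij) (-1)
  have m10 : Matrix.single i j a * Matrix.single j j (-1)
      = Matrix.single i j (-a) := by
    rw [Matrix.single_mul_single_same]; norm_num
  have m11 : Matrix.single i j a * Matrix.single i j (-1) = 0 :=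
    Matrix.single_mul_single_of_ne (c := a) i j _ (Ne.symm hij) (-1)
  have m12 : Matrix.single i j a * Matrix.single j i 1
      = Matrix.single i i a := by
    rw [Matrix.single_mul_single_same]; norm_num
  have m13 : Matrix.single j i (-a⁻¹) * Matrix.single i i (-1)
      = Matrix.single j i a⁻¹ := by
    rw [Matrix.single_mul_single_same]; norm_num
  have m14 : Matrix.single j i (-a⁻¹) * Matrix.single j j (-1) = 0 :=
    Matrix.single_mul_single_of_ne (c := (-a⁻¹)) j i _ hij (-1)
  have m15 : Matrix.single j i (-a⁻¹) * Matrix.single i j (-1)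
      = Matrix.single j j a⁻¹ := by
    rw [Matrix.single_mul_single_same]; norm_num
  have m16 : Matrix.single j i (-a⁻¹) * Matrix.single j i 1 = 0 :=
    Matrix.single_mul_single_of_ne (c := (-a⁻¹)) j i _ hij 1
  rw [m1, m2, m3, m4, m5, m6, m7, m8, m9, m10, m11, m12, m13, m14, m15, m16]
  simp only [std_neg, sub_eq_add_neg, Matrix.single_add]
  abel

lemma InN_whitehead (N : Subgroup ↥(SAutGrp k n)) (hN : N.Normal)
    (htr : ∀ c : Fin n → k, translS c ∈ N) (hcase : ¬(Nat.card k = 2 ∧ n = 2))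
    (i j : Fin n) (hij : i ≠ j) (a : k) (ha : a ≠ 0) :
    InN N (Matrix.diagonal (fun l => if l = i then a else if l = j then a⁻¹ else 1)) := by
  rw [← whitehead i j hij a ha]
  have T := fun (p q : Fin n) (hpq : p ≠ q) (c : k) => InN_transvection N hN htr hcase p q hpq c
  exact InN_mul (InN_mul (InN_mul (T i j hij a) (T j i (Ne.symm hij) (-a⁻¹))) (T i j hij a))
    (InN_mul (InN_mul (T i j hij (-1)) (T j i (Ne.symm hij) 1)) (T i j hij (-1)))

lemma InN_diagonal (N : Subgroup ↥(SAutGrp k n)) (hN : N.Normal)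
    (htr : ∀ c : Fin n → k, translS c ∈ N) (hcase : ¬(Nat.card k = 2 ∧ n = 2))
    (d : Fin n → k) (h0 : ∀ i, d i ≠ 0) (h1 : ∏ i, d i = 1) :
    InN N (Matrix.diagonal d) := by
  classical
  suffices h : ∀ (m : ℕ) (d : Fin n → k), (∀ i, d i ≠ 0) → ∏ i, d i = 1 →
      (Finset.univ.filter fun i => d i ≠ 1).card ≤ m → InN N (Matrix.diagonal d) by
    exact h _ d h0 h1 le_rfl
  intro m
  induction m with
  | zero =>
      intro d h0 h1 hcard
      have hall : ∀ i, d i = 1 := by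
        intro i
        by_contra hne
        have hmem : i ∈ Finset.univ.filter (fun i => d i ≠ 1) :=
          Finset.mem_filter.2 ⟨Finset.mem_univ i, hne⟩
        have := Finset.card_pos.2 ⟨i, hmem⟩
        omega
      have hd : Matrix.diagonal d = 1 := by
        rw [show d = fun _ => (1 : k) from funext hall]
        exact Matrix.diagonal_one
      rw [hd]
      exact InN_one N
  | succ m ih =>
      intro d h0 h1 hcard
      by_cases hsmall : (Finset.univ.filter fun i => d i ≠ 1).card ≤ m
      · exact ih d h0 h1 hsmall
      push_neg at hsmall
      have hne : (Finset.univ.filter fun i => d i ≠ 1).Nonempty :=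
        Finset.card_pos.1 (by omega)
      obtain ⟨i, hi⟩ := hne
      have hdi : d i ≠ 1 := (Finset.mem_filter.1 hi).2
      by_cases hex : ∃ j ∈ Finset.univ.filter fun i => d i ≠ 1, j ≠ i
      · obtain ⟨j, hjs, hji⟩ := hex
        have hdj : d j ≠ 1 := (Finset.mem_filter.1 hjs).2
        set d' := Function.update (Function.update d i 1) j (d i * d j) with hd'
        have hd'i : d' i = 1 := by
          rw [hd', Function.update_of_ne (Ne.symm hji), Function.update_self]
        have hd'j : d' j = d i * d j := by rw [hd', Function.update_self]
        have hd'l : ∀ l, l ≠ i → l ≠ j → d' l = d l := fun l hli hlj => by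
          rw [hd', Function.update_of_ne hlj, Function.update_of_ne hli]
        have hfun : d = fun l =>
            (if l = i then d i else if l = j then (d i)⁻¹ else 1) * d' l := by
          funext l
          rcases eq_or_ne l i with rfl | hli
          · rw [hd'i, if_pos rfl, mul_one]
          · rcases eq_or_ne l j with rfl | hlj
            · rw [hd'j, if_neg hli, if_pos rfl]
              rw [inv_mul_cancel_left₀ (h0 i)]
            · rw [hd'l l hli hlj, if_neg hli, if_neg hlj, one_mul]
        have h0' : ∀ l, d' l ≠ 0 := by
          intro l
          by_cases hli : l = i
          · rw [hli, hd'i]; exact one_ne_zero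
          · by_cases hlj : l = j
            · rw [hlj, hd'j]; exact mul_ne_zero (h0 i) (h0 j)
            · rw [hd'l l hli hlj]; exact h0 l
        have h1' : ∏ l, d' l = 1 := by
          have key : ∏ l, d' l = ∏ l, d l := by
            rw [hd', Finset.prod_update_of_mem (Finset.mem_univ j),
              Finset.prod_update_of_mem (by
                rw [Finset.mem_sdiff]
                exact ⟨Finset.mem_univ i, by simp [Ne.symm hji]⟩), one_mul]
            rw [show (Finset.univ : Finset (Fin n)) \ {j} = Finset.univ.erase j by
                rw [Finset.sdiff_singleton_eq_erase],
              show (Finset.univ.erase j) \ {i} = (Finset.univ.erase j).erase i by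
                rw [Finset.sdiff_singleton_eq_erase]]
            rw [← Finset.mul_prod_erase _ d (Finset.mem_univ j),
              ← Finset.mul_prod_erase _ d (Finset.mem_erase.2 ⟨Ne.symm hji, Finset.mem_univ i⟩)]
            ring
          rw [key, h1]
        have hcard' : (Finset.univ.filter fun l => d' l ≠ 1).card ≤ m := by
          have hsubset : (Finset.univ.filter fun l => d' l ≠ 1)
              ⊆ (Finset.univ.filter fun l => d l ≠ 1).erase i := by
            intro l hl
            have hl2 := (Finset.mem_filter.1 hl).2
            rcases eq_or_ne l i with rfl | hli
            · exact absurd hd'i hl2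
            · refine Finset.mem_erase.2 ⟨hli, ?_⟩
              rcases eq_or_ne l j with rfl | hlj
              · exact hjs
              · rw [hd'l l hli hlj] at hl2
                exact Finset.mem_filter.2 ⟨Finset.mem_univ l, hl2⟩
          have := Finset.card_le_card hsubset
          rw [Finset.card_erase_of_mem hi] at this
          omega
        rw [show Matrix.diagonal d = Matrix.diagonal
              (fun l => if l = i then d i else if l = j then (d i)⁻¹ else 1)
            * Matrix.diagonal d' by rw [Matrix.diagonal_mul_diagonal, ← hfun]]
        exact InN_mul (InN_whitehead N hN htr hcase i j (Ne.symm hji) (d i) (h0 i))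
          (ih d' h0' h1' hcard')
      · push_neg at hex
        exfalso
        have hprod : ∏ l, d l = d i := by
          rw [← Finset.mul_prod_erase _ d (Finset.mem_univ i)]
          have : ∏ l ∈ Finset.univ.erase i, d l = 1 := by
            apply Finset.prod_eq_one
            intro l hl
            by_contra hne
            exact (Finset.mem_erase.1 hl).1
              (hex l (Finset.mem_filter.2 ⟨Finset.mem_univ l, hne⟩))
          rw [this, mul_one]
        exact hdi (hprod ▸ h1)

/-- Every element of `SL_n(k)` (as an automorphism) lies in `N`. -/
lemma SL_mem_N (N : Subgroup ↥(SAutGrp k n)) (hN : N.Normal)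
    (htr : ∀ c : Fin n → k, translS c ∈ N) (hcase : ¬(Nat.card k = 2 ∧ n = 2)) :
    ∀ f : ↥(SAutGrp k n), MemSL (f : PolyAut k n) → f ∈ N := by
  intro f hf
  obtain ⟨M, hdet, hval⟩ := hf
  have hInN : InN N M := by
    obtain ⟨L, L', D, hD⟩ := Matrix.Pivot.exists_list_transvec_mul_mul_list_transvec_eq_diagonal M
    set A := (L.map Matrix.TransvectionStruct.toMatrix).prod with hA_def
    set B := (L'.map Matrix.TransvectionStruct.toMatrix).prod with hB_def
    set A' := (L.reverse.map
      (Matrix.TransvectionStruct.toMatrix ∘ Matrix.TransvectionStruct.inv)).prod with hA'_def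
    set B' := (L'.reverse.map
      (Matrix.TransvectionStruct.toMatrix ∘ Matrix.TransvectionStruct.inv)).prod with hB'_def
    have hAA : A' * A = 1 := Matrix.TransvectionStruct.reverse_inv_prod_mul_prod L
    have hBB : B * B' = 1 := Matrix.TransvectionStruct.prod_mul_reverse_inv_prod L'
    have hM : M = A' * Matrix.diagonal D * B' := by
      calc M = 1 * M * 1 := by rw [one_mul, mul_one]
        _ = (A' * A) * M * (B * B') := by rw [hAA, hBB]
        _ = A' * (A * M * B) * B' := by simp only [Matrix.mul_assoc]
        _ = A' * Matrix.diagonal D * B' := by rw [hD]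
    have hdetD : (Matrix.diagonal D).det = 1 := by
      have hdA : A.det = 1 := Matrix.TransvectionStruct.det_toMatrix_prod L
      have hdB : B.det = 1 := Matrix.TransvectionStruct.det_toMatrix_prod L'
      rw [← hD, Matrix.det_mul, Matrix.det_mul, hdA, hdB, hdet, one_mul, mul_one]
    have hprodD : ∏ i, D i = 1 := by
      rw [Matrix.det_diagonal] at hdetD
      exact hdetD
    have hD0 : ∀ i, D i ≠ 0 := by
      intro i hzero
      exact one_ne_zero (hprodD.symm.trans (Finset.prod_eq_zero (Finset.mem_univ i) hzero))
    have hInNA' : InN N A' := by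
      rw [hA'_def, ← List.map_map]
      exact InN_listprod N hN htr hcase _
    have hInNB' : InN N B' := by
      rw [hB'_def, ← List.map_map]
      exact InN_listprod N hN htr hcase _
    rw [hM]
    exact InN_mul (InN_mul hInNA' (InN_diagonal N hN htr hcase D hD0 hprodD)) hInNB'
  obtain ⟨hdet1, hmem⟩ := hInN
  have hfix : f = linS M hdet1 := SAut_ext (by
    show ((f : PolyAut k n) : PolyEnd k n) = linEnd M
    exact hval)
  rw [hfix]
  exact hmem

end Aux4


section Aux5

variable {k : Type*} [Field k] {n : ℕ}

lemma eval_bind₁' (v : Fin n → k) (g : Fin n → MvPolynomial (Fin n) k)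
    (p : MvPolynomial (Fin n) k) :
    eval v (bind₁ g p) = eval (fun j => eval v (g j)) p := by
  induction p using MvPolynomial.induction_on with
  | C a => simp
  | add p q hp hq => simp [hp, hq]
  | mul_X p i hp => simp [hp]

/-- Evaluation of an endomorphism on points, as a monoid homomorphism. -/
noncomputable def evalEnd : PolyEnd k n →* Function.End (Fin n → k) where
  toFun f := fun v i => eval v (f i)
  map_one' := funext fun v => funext fun i => by
    show eval v (X i) = v i
    rw [eval_X]
  map_mul' f g := funext fun v => funext fun i => by
    show eval v (bind₁ g (f i)) = eval (fun j => eval v (g j)) (f i)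
    exact eval_bind₁' v g (f i)

/-- The permutation of `kⁿ` induced by a polynomial automorphism. -/
noncomputable def toPerm : PolyAut k n →* Equiv.Perm (Fin n → k) :=
  ((Equiv.Perm.equivUnitsEnd (α := Fin n → k)).symm.toMonoidHom).comp (Units.map evalEnd)

lemma toPerm_apply (f : PolyAut k n) (v : Fin n → k) :
    toPerm f v = fun i => eval v ((f : PolyEnd k n) i) := rfl

lemma one_add_one_eq_zero (hk : Nat.card k = 2) : (1 : k) + 1 = 0 := by
  rcases (card_two_iff_all_zero_or_one.1 hk) ((1 : k) + 1) with h | h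
  · exact h
  · exact absurd (add_right_cancel (h.trans (zero_add 1).symm)) one_ne_zero

lemma transl_zero' : (transl (0 : Fin n → k)) = (1 : PolyAut k n) :=
  Units.ext (by rw [transl_val, translEnd_zero]; rfl)

lemma transl_mul' (a b : Fin n → k) : transl a * transl b = transl (a + b) :=
  Units.ext (translEnd_mul a b)

/-- The exceptional normal subgroup over the field with two elements in dimension 2. -/
lemma exceptional_case (hk : Nat.card k = 2) :
    ∃ N : Subgroup ↥(SAutGrp k 2), N.Normal ∧ (∀ c : Fin 2 → k, translS c ∈ N) ∧
      ¬(∀ f : ↥(SAutGrp k 2), MemSL (f : PolyAut k 2) → f ∈ N) := by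
  classical
  have hsum : (1 : k) + 1 = 0 := one_add_one_eq_zero hk
  haveI : Finite k := Nat.finite_of_card_ne_zero (by omega)
  haveI : Fintype k := Fintype.ofFinite k
  have hall : ∀ x : k, x = 0 ∨ x = 1 := card_two_iff_all_zero_or_one.1 hk
  -- the four points of k²
  have mem4 : ∀ v : Fin 2 → k,
      v = ![0,0] ∨ v = ![1,0] ∨ v = ![0,1] ∨ v = ![1,1] := by
    intro v
    rcases hall (v 0) with h0 | h0 <;> rcases hall (v 1) with h1 | h1
    · exact Or.inl (funext fun i => by fin_cases i <;> simp [h0, h1])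
    · exact Or.inr (Or.inr (Or.inl (funext fun i => by fin_cases i <;> simp [h0, h1])))
    · exact Or.inr (Or.inl (funext fun i => by fin_cases i <;> simp [h0, h1]))
    · exact Or.inr (Or.inr (Or.inr (funext fun i => by fin_cases i <;> simp [h0, h1])))
  -- distinctness
  have dAB : (![0,0] : Fin 2 → k) ≠ ![1,0] := fun h => zero_ne_one (α := k) (by simpa using congrFun h 0)
  have dA01 : (![0,0] : Fin 2 → k) ≠ ![0,1] := fun h => zero_ne_one (α := k) (by simpa using congrFun h 1)
  have dA11 : (![0,0] : Fin 2 → k) ≠ ![1,1] := fun h => zero_ne_one (α := k) (by simpa using congrFun h 0)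
  have dB01 : (![1,0] : Fin 2 → k) ≠ ![0,1] := fun h => one_ne_zero (α := k) (by simpa using congrFun h 0)
  have dB11 : (![1,0] : Fin 2 → k) ≠ ![1,1] := fun h => zero_ne_one (α := k) (by simpa using congrFun h 1)
  have d0111 : (![0,1] : Fin 2 → k) ≠ ![1,1] := fun h => zero_ne_one (α := k) (by simpa using congrFun h 0)
  -- vector sums
  have haddv : ∀ a b c d : k, (![a,b] : Fin 2 → k) + ![c,d] = ![a+c, b+d] := fun a b c d =>
    funext fun i => by fin_cases i <;> simp
  have s00 : (![0,0] : Fin 2 → k) + ![1,0] = ![1,0] := by rw [haddv, zero_add, zero_add]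
  have s10 : (![1,0] : Fin 2 → k) + ![1,0] = ![0,0] := by rw [haddv, hsum, add_zero]
  have s01 : (![0,1] : Fin 2 → k) + ![1,0] = ![1,1] := by rw [haddv, zero_add, add_zero]
  have s11 : (![1,1] : Fin 2 → k) + ![1,0] = ![0,1] := by rw [haddv, hsum, add_zero]
  have t00 : (![0,0] : Fin 2 → k) + ![0,1] = ![0,1] := by rw [haddv, zero_add, zero_add]
  have t10 : (![1,0] : Fin 2 → k) + ![0,1] = ![1,1] := by rw [haddv, add_zero, zero_add]
  have t01 : (![0,1] : Fin 2 → k) + ![0,1] = ![0,0] := by rw [haddv, add_zero, hsum]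
  have t11 : (![1,1] : Fin 2 → k) + ![0,1] = ![1,0] := by rw [haddv, add_zero, hsum]
  -- evaluation of translations
  have hev : ∀ c v : Fin 2 → k, toPerm (transl c : PolyAut k 2) v = v + c := by
    intro c v
    funext i
    have h0 : toPerm (transl c : PolyAut k 2) v i = eval v (translEnd c i) := rfl
    rw [h0, translEnd_apply]
    simp
  -- the two generating translations are even permutations
  have hp10 : toPerm (transl (![1,0] : Fin 2 → k) : PolyAut k 2)
      = Equiv.swap ![0,0] ![1,0] * Equiv.swap ![0,1] ![1,1] := by
    apply Equiv.ext
    intro v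
    rcases mem4 v with rfl | rfl | rfl | rfl
    · rw [hev, s00, Equiv.Perm.mul_apply, Equiv.swap_apply_of_ne_of_ne dA01 dA11,
        Equiv.swap_apply_left]
    · rw [hev, s10, Equiv.Perm.mul_apply, Equiv.swap_apply_of_ne_of_ne dB01 dB11,
        Equiv.swap_apply_right]
    · rw [hev, s01, Equiv.Perm.mul_apply, Equiv.swap_apply_left,
        Equiv.swap_apply_of_ne_of_ne (Ne.symm dA11) (Ne.symm dB11)]
    · rw [hev, s11, Equiv.Perm.mul_apply, Equiv.swap_apply_right,
        Equiv.swap_apply_of_ne_of_ne (Ne.symm dA01) (Ne.symm dB01)]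
  have hp01 : toPerm (transl (![0,1] : Fin 2 → k) : PolyAut k 2)
      = Equiv.swap ![0,0] ![0,1] * Equiv.swap ![1,0] ![1,1] := by
    apply Equiv.ext
    intro v
    rcases mem4 v with rfl | rfl | rfl | rfl
    · rw [hev, t00, Equiv.Perm.mul_apply, Equiv.swap_apply_of_ne_of_ne dAB dA11,
        Equiv.swap_apply_left]
    · rw [hev, t10, Equiv.Perm.mul_apply, Equiv.swap_apply_left,
        Equiv.swap_apply_of_ne_of_ne (Ne.symm dA11) (Ne.symm d0111)]
    · rw [hev, t01, Equiv.Perm.mul_apply, Equiv.swap_apply_of_ne_of_ne (Ne.symm dB01) d0111,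
        Equiv.swap_apply_right]
    · rw [hev, t11, Equiv.Perm.mul_apply, Equiv.swap_apply_right,
        Equiv.swap_apply_of_ne_of_ne (Ne.symm dAB) dB01]
  have h10 : Equiv.Perm.sign (toPerm (transl (![1,0] : Fin 2 → k) : PolyAut k 2)) = 1 := by
    rw [hp10, map_mul, Equiv.Perm.sign_swap dAB, Equiv.Perm.sign_swap d0111]
    decide
  have h01 : Equiv.Perm.sign (toPerm (transl (![0,1] : Fin 2 → k) : PolyAut k 2)) = 1 := by
    rw [hp01, map_mul, Equiv.Perm.sign_swap dA01, Equiv.Perm.sign_swap dB11]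
    decide
  have hsg : ∀ c : Fin 2 → k,
      Equiv.Perm.sign (toPerm (transl c : PolyAut k 2)) = 1 := by
    intro c
    rcases mem4 c with rfl | rfl | rfl | rfl
    · have hz : (![0,0] : Fin 2 → k) = 0 := funext fun i => by fin_cases i <;> simp
      rw [hz, transl_zero', map_one, map_one]
    · exact h10
    · exact h01
    · rw [show (![1,1] : Fin 2 → k) = ![1,0] + ![0,1] from t10.symm, ← transl_mul',
        map_mul, map_mul, h10, h01, mul_one]
  -- the sign character
  set χ : ↥(SAutGrp k 2) →* ℤˣ :=
    Equiv.Perm.sign.comp (toPerm.comp (SAutGrp k 2).subtype) with hχ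
  refine ⟨χ.ker, MonoidHom.normal_ker χ, ?_, ?_⟩
  · intro c
    have : χ (translS c) = Equiv.Perm.sign (toPerm (transl c : PolyAut k 2)) := rfl
    exact MonoidHom.mem_ker.2 (this.trans (hsg c))
  · intro hallSL
    have hdet : (!![(0:k),1;1,0]).det = 1 := by
      rw [Matrix.det_fin_two_of]
      linear_combination -hsum
    set f0 : ↥(SAutGrp k 2) := linS !![(0:k),1;1,0] hdet with hf0
    have hf0SL : MemSL (f0 : PolyAut k 2) := ⟨_, hdet, rfl⟩
    have hker := MonoidHom.mem_ker.1 (hallSL f0 hf0SL)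
    have hswapv : ∀ a b : k, (![(![a,b] : Fin 2 → k) 1, (![a,b] : Fin 2 → k) 0] : Fin 2 → k)
        = ![b, a] := fun a b => funext fun i => by fin_cases i <;> simp
    have hevf : ∀ v : Fin 2 → k, toPerm (f0 : PolyAut k 2) v = ![v 1, v 0] := by
      intro v
      funext i
      have h0 : toPerm (f0 : PolyAut k 2) v i = eval v (linEnd !![(0:k),1;1,0] i) := rfl
      rw [h0]
      show eval v (∑ j, C (!![(0:k),1;1,0] i j) * X j) = ![v 1, v 0] i
      fin_cases i <;> simp [Fin.sum_univ_two]
    have hperm : toPerm (f0 : PolyAut k 2) = Equiv.swap ![1,0] ![0,1] := by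
      apply Equiv.ext
      intro v
      rcases mem4 v with rfl | rfl | rfl | rfl
      · rw [hevf, hswapv, Equiv.swap_apply_of_ne_of_ne dAB dA01]
      · rw [hevf, hswapv, Equiv.swap_apply_left]
      · rw [hevf, hswapv, Equiv.swap_apply_right]
      · rw [hevf, hswapv, Equiv.swap_apply_of_ne_of_ne (Ne.symm dB11) (Ne.symm d0111)]
    have hχf0 : χ f0 = -1 := by
      have : χ f0 = Equiv.Perm.sign (toPerm (f0 : PolyAut k 2)) := rfl
      rw [this, hperm, Equiv.Perm.sign_swap dB01]
    rw [hχf0] at hker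
    exact absurd hker (by decide)

end Aux5


/-- **Proposition.**  Let `k` be a field and `n ≥ 1`.  There exists a normal subgroup of
`SAut_k(𝔸ⁿ)` containing all translations but not containing `SL_n(k)` if and only if
`|k| = 2` and `n = 2`. -/
theorem exists_normal_translations_not_SL_iff {k : Type*} [Field k] {n : ℕ} (hn : 1 ≤ n) :
    (∃ N : Subgroup ↥(SAutGrp k n), N.Normal ∧ (∀ c : Fin n → k, translS c ∈ N) ∧
      ¬(∀ f : ↥(SAutGrp k n), MemSL (f : PolyAut k n) → f ∈ N)) ↔
    (Nat.card k = 2 ∧ n = 2) := by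
  constructor
  · rintro ⟨N, hN, htr, hnot⟩
    by_contra hcase
    exact hnot (SL_mem_N N hN htr hcase)
  · rintro ⟨hk, rfl⟩
    exact exceptional_case hk
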